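/- Let (q_n) be any sequence of positive integers with q_n → ∞ and let (y_n) be any sequence of real numbers in the interval [−1/2, 5/2]. Then the set ( ∪_{n≥1} { g(y_n) : g ∈ Red_{q_n} } ) ∩ [0,1], where g acts by the fractional linear transformation g(z) = (az+b)/(cz+d) for g = [[a,b],[c,d]], is dense in [0,1]. -/

import Mathlib

open MeasureTheory Filter Matrix

set_option synthInstance.maxHeartbeats 1000000
set_option maxHeartbeats 1000000

noncomputable section

/-- The matrix `γ_k = [[0,1],[1,k]]` as an element of `GL(2,ℤ)`. -/
def gammaK (k : ℤ) : GL (Fin 2) ℤ :=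
  ⟨!![0,1;1,k], !![-k,1;1,0],
   by ext i j; fin_cases i <;> fin_cases j <;>
      simp [Matrix.mul_apply, Fin.sum_univ_two, Matrix.one_apply],
   by ext i j; fin_cases i <;> fin_cases j <;>
      simp [Matrix.mul_apply, Fin.sum_univ_two, Matrix.one_apply]⟩

/-- `Red_n`: products of exactly `n` matrices `γ_k`, `k ≥ 1`. -/
def RedN (n : ℕ) : Set (GL (Fin 2) ℤ) :=
  { g | ∃ k : Fin n → ℤ, (∀ i, 1 ≤ k i) ∧ g = (List.ofFn (fun i => gammaK (k i))).prod }

/-- The fractional linear action of `g = [[a,b],[c,d]] ∈ GL(2,ℤ)` on `ℝ`. -/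
def moeb (g : GL (Fin 2) ℤ) (x : ℝ) : ℝ :=
  (((g : Matrix (Fin 2) (Fin 2) ℤ) 0 0 : ℝ) * x + ((g : Matrix (Fin 2) (Fin 2) ℤ) 0 1 : ℝ)) /
  (((g : Matrix (Fin 2) (Fin 2) ℤ) 1 0 : ℝ) * x + ((g : Matrix (Fin 2) (Fin 2) ℤ) 1 1 : ℝ))

/-- The continued fraction value `[k_1, …, k_m + y]`. -/
def Wcf (ks : List ℤ) (y : ℝ) : ℝ := ks.foldr (fun k v => 1/((k:ℝ)+v)) y

lemma Wcf_nil (y : ℝ) : Wcf [] y = y := rfl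

lemma Wcf_cons (k : ℤ) (ks : List ℤ) (y : ℝ) :
    Wcf (k::ks) y = 1/((k:ℝ) + Wcf ks y) := rfl

lemma Wcf_bounds (ks : List ℤ) (h : ∀ k ∈ ks, 1 ≤ k) (y : ℝ) (hy : -(1/2:ℝ) ≤ y) :
    -(1/2:ℝ) ≤ Wcf ks y ∧ (ks ≠ [] → 0 < Wcf ks y ∧ Wcf ks y ≤ 2) := by
  induction ks with
  | nil => exact ⟨by simpa [Wcf_nil] using hy, by simp⟩
  | cons k ks ih =>
    have hk : (1:ℤ) ≤ k := h k (by simp)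
    have hk' : (1:ℝ) ≤ (k:ℝ) := by exact_mod_cast hk
    have ih' := ih (fun a ha => h a (by simp [ha]))
    have hd : (1/2:ℝ) ≤ (k:ℝ) + Wcf ks y := by linarith [ih'.1]
    have hd0 : (0:ℝ) < (k:ℝ) + Wcf ks y := by linarith
    have hpos : 0 < Wcf (k::ks) y := by
      rw [Wcf_cons]; positivity
    have hle : Wcf (k::ks) y ≤ 2 := by
      rw [Wcf_cons, div_le_iff₀ hd0]; linarith
    exact ⟨by linarith, fun _ => ⟨hpos, hle⟩⟩

lemma Wcf_lt_one (k : ℤ) (ks : List ℤ) (h : ∀ a ∈ (k::ks), 1 ≤ a) (hne : ks ≠ [])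
    (y : ℝ) (hy : -(1/2:ℝ) ≤ y) : Wcf (k::ks) y < 1 := by
  have hk : (1:ℝ) ≤ (k:ℝ) := by exact_mod_cast h k (by simp)
  have ht := (Wcf_bounds ks (fun a ha => h a (by simp [ha])) y hy).2 hne
  rw [Wcf_cons, div_lt_one (by linarith [ht.1])]
  linarith [ht.1]

lemma gammaK_val (k : ℤ) : ((gammaK k : GL (Fin 2) ℤ) : Matrix (Fin 2) (Fin 2) ℤ) = !![0,1;1,k] := rfl

lemma moeb_prod (ks : List ℤ) (h : ∀ k ∈ ks, 1 ≤ k) (y : ℝ) (hy : -(1/2:ℝ) ≤ y) :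
    0 < ((((ks.map gammaK).prod : GL (Fin 2) ℤ) : Matrix (Fin 2) (Fin 2) ℤ) 1 0 : ℝ) * y
        + ((((ks.map gammaK).prod : GL (Fin 2) ℤ) : Matrix (Fin 2) (Fin 2) ℤ) 1 1 : ℝ) ∧
    moeb ((ks.map gammaK).prod) y = Wcf ks y := by
  induction ks with
  | nil =>
    simp only [List.map_nil, List.prod_nil, Wcf_nil]
    constructor
    · simp [Units.val_one, Matrix.one_apply]
    · simp [moeb, Units.val_one, Matrix.one_apply]
  | cons k ks ih =>
    have hk : (1:ℤ) ≤ k := h k (by simp)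
    have hk' : (1:ℝ) ≤ (k:ℝ) := by exact_mod_cast hk
    have ih' := ih (fun a ha => h a (by simp [ha]))
    set M : Matrix (Fin 2) (Fin 2) ℤ :=
      (((ks.map gammaK).prod : GL (Fin 2) ℤ) : Matrix (Fin 2) (Fin 2) ℤ) with hM
    set N : ℝ := (M 0 0 : ℝ) * y + (M 0 1 : ℝ) with hN
    set D : ℝ := (M 1 0 : ℝ) * y + (M 1 1 : ℝ) with hD
    have hD0 : 0 < D := ih'.1
    have hND : N / D = Wcf ks y := ih'.2
    have hWlb : -(1/2:ℝ) ≤ Wcf ks y := (Wcf_bounds ks (fun a ha => h a (by simp [ha])) y hy).1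
    have hNval : N = Wcf ks y * D := by
      rw [← hND]; field_simp
    have hprod : (((k::ks).map gammaK).prod : Matrix (Fin 2) (Fin 2) ℤ)
        = !![0,1;1,k] * M := by
      rw [List.map_cons, List.prod_cons, Units.val_mul, gammaK_val]
    have e00 : (!![0,1;1,k] * M) 0 0 = M 1 0 := by
      simp [Matrix.mul_apply, Fin.sum_univ_two]
    have e01 : (!![0,1;1,k] * M) 0 1 = M 1 1 := by
      simp [Matrix.mul_apply, Fin.sum_univ_two]
    have e10 : (!![0,1;1,k] * M) 1 0 = M 0 0 + k * M 1 0 := by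
      simp [Matrix.mul_apply, Fin.sum_univ_two]
    have e11 : (!![0,1;1,k] * M) 1 1 = M 0 1 + k * M 1 1 := by
      simp [Matrix.mul_apply, Fin.sum_univ_two]
    have hDnew : ((((k::ks).map gammaK).prod : Matrix (Fin 2) (Fin 2) ℤ) 1 0 : ℝ) * y
        + ((((k::ks).map gammaK).prod : Matrix (Fin 2) (Fin 2) ℤ) 1 1 : ℝ)
        = N + (k:ℝ) * D := by
      rw [hprod, e10, e11]; push_cast; ring
    have hpos : 0 < N + (k:ℝ) * D := by
      have : N + (k:ℝ) * D = D * (Wcf ks y + (k:ℝ)) := by rw [hNval]; ring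
      rw [this]
      have : 0 < Wcf ks y + (k:ℝ) := by linarith
      positivity
    refine ⟨by rw [hDnew]; exact hpos, ?_⟩
    have hmoeb : moeb (((k::ks).map gammaK).prod) y = D / (N + (k:ℝ) * D) := by
      unfold moeb
      rw [hprod, e00, e01, e10, e11]; push_cast; rw [hD, hN]; ring
    rw [hmoeb, Wcf_cons, ← hND]
    have hrw : (k:ℝ) + N/D = (N + (k:ℝ)*D)/D := by field_simp; ring
    rw [hrw, one_div_div]

lemma mem_RedN (ks : List ℤ) (h : ∀ k ∈ ks, 1 ≤ k) :
    (ks.map gammaK).prod ∈ RedN ks.length := by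
  refine ⟨fun i => ks.get i, fun i => h _ (by simpa using List.get_mem ks i.1 i.2), ?_⟩
  congr 1
  apply List.ext_getElem
  · simp
  · intro i h1 h2
    simp

/-- Main approximation lemma: any irrational `x ∈ (0,1)` can be approximated by
continued fractions of any prescribed length with entries `≥ 1` and arbitrary
tail `y ≥ -1/2`. -/
lemma cf_approx : ∀ m : ℕ, ∀ x : ℝ, Irrational x → 0 < x → x < 1 →
    ∃ ks : List ℤ, ks.length = m + 1 ∧ (∀ k ∈ ks, 1 ≤ k) ∧
      ∀ y : ℝ, -(1/2:ℝ) ≤ y → |Wcf ks y - x| ≤ 4 * (1/2 : ℝ) ^ ((m+1) / 2) := by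
  intro m
  induction m using Nat.twoStepInduction with
  | zero =>
    intro x hxirr hx0 hx1
    refine ⟨[1], rfl, by simp, fun y hy => ?_⟩
    have hb := (Wcf_bounds [1] (by simp) y hy).2 (by simp)
    have h4 : (4:ℝ) * (1/2)^((0+1)/2) = 4 := by norm_num
    rw [h4, abs_le]
    constructor <;> linarith [hb.1, hb.2]
  | one =>
    intro x hxirr hx0 hx1
    refine ⟨[1,1], rfl, by simp, fun y hy => ?_⟩
    have hb := (Wcf_bounds [1,1] (by simp) y hy).2 (by simp)
    have h4 : (4:ℝ) * (1/2)^((1+1)/2) = 2 := by norm_num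
    rw [h4, abs_le]
    constructor <;> linarith [hb.1, hb.2]
  | more m ih _ =>
    intro x hxirr hx0 hx1
    -- extract two digits
    have hxne : x ≠ 0 := ne_of_gt hx0
    have hinv : Irrational (1/x) := by
      simpa [one_div] using hxirr.inv
    have h1x : 1 < 1/x := one_lt_one_div hx0 hx1
    set k0 : ℤ := ⌊1/x⌋ with hk0def
    have hk0 : 1 ≤ k0 := Int.le_floor.mpr (by exact_mod_cast h1x.le)
    set x1 : ℝ := 1/x - k0 with hx1def
    have hx1irr : Irrational x1 := hinv.sub_intCast k0
    have hx1pos : 0 < x1 := by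
      have : (1/x) ≠ (k0:ℝ) := hinv.ne_int k0
      have hfl := Int.floor_le (1/x)
      rw [hx1def]
      rcases lt_or_eq_of_le hfl with h | h
      · linarith
      · exact absurd h.symm this
    have hx1lt : x1 < 1 := by
      have := Int.lt_floor_add_one (1/x)
      rw [hx1def]; linarith
    have hxeq : x = 1/((k0:ℝ) + x1) := by
      rw [hx1def]
      have : (k0:ℝ) + (1/x - k0) = 1/x := by ring
      rw [this, one_div_one_div]
    -- second digit
    have hx1ne : x1 ≠ 0 := ne_of_gt hx1pos
    have hinv1 : Irrational (1/x1) := by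
      simpa [one_div] using hx1irr.inv
    have h1x1 : 1 < 1/x1 := one_lt_one_div hx1pos hx1lt
    set k1 : ℤ := ⌊1/x1⌋ with hk1def
    have hk1 : 1 ≤ k1 := Int.le_floor.mpr (by exact_mod_cast h1x1.le)
    set x2 : ℝ := 1/x1 - k1 with hx2def
    have hx2irr : Irrational x2 := hinv1.sub_intCast k1
    have hx2pos : 0 < x2 := by
      have : (1/x1) ≠ (k1:ℝ) := hinv1.ne_int k1
      have hfl := Int.floor_le (1/x1)
      rw [hx2def]
      rcases lt_or_eq_of_le hfl with h | h
      · linarith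
      · exact absurd h.symm this
    have hx2lt : x2 < 1 := by
      have := Int.lt_floor_add_one (1/x1)
      rw [hx2def]; linarith
    have hx1eq : x1 = 1/((k1:ℝ) + x2) := by
      rw [hx2def]
      have : (k1:ℝ) + (1/x1 - k1) = 1/x1 := by ring
      rw [this, one_div_one_div]
    obtain ⟨ks', hlen', hpos', herr'⟩ := ih x2 hx2irr hx2pos hx2lt
    refine ⟨k0 :: k1 :: ks', by simp [hlen'], ?_, fun y hy => ?_⟩
    · intro a ha
      simp only [List.mem_cons] at ha
      rcases ha with rfl | rfl | h
      · exact hk0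
      · exact hk1
      · exact hpos' a h
    have hne' : ks' ≠ [] := by
      intro h; rw [h] at hlen'; simp at hlen'
    have hk0' : (1:ℝ) ≤ (k0:ℝ) := by exact_mod_cast hk0
    have hk1' : (1:ℝ) ≤ (k1:ℝ) := by exact_mod_cast hk1
    set w := Wcf ks' y with hwdef
    have hwb := (Wcf_bounds ks' hpos' y hy).2 hne'
    have hw0 : 0 < w := hwb.1
    set v1 : ℝ := 1/((k1:ℝ) + w) with hv1def
    have hv1pos : 0 < v1 := by rw [hv1def]; positivity
    have hWeq : Wcf (k0 :: k1 :: ks') y = 1/((k0:ℝ) + v1) := by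
      rw [Wcf_cons, Wcf_cons]
    have herr2 := herr' y hy
    -- error identities
    have hd1 : (0:ℝ) < (k0:ℝ) + v1 := by linarith
    have hd2 : (0:ℝ) < (k0:ℝ) + x1 := by linarith
    have hd3 : (0:ℝ) < (k1:ℝ) + w := by linarith
    have hd4 : (0:ℝ) < (k1:ℝ) + x2 := by linarith
    clear_value k0 x1 k1 x2 w v1
    have e1 : Wcf (k0 :: k1 :: ks') y - x
        = (x1 - v1) / (((k0:ℝ)+v1) * ((k0:ℝ)+x1)) := by
      rw [hWeq, hxeq]
      field_simp
      ring
    have e2 : v1 - x1 = (x2 - w) / (((k1:ℝ)+w) * ((k1:ℝ)+x2)) := by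
      rw [hv1def, hx1eq]
      field_simp
      ring
    have habs1 : |Wcf (k0 :: k1 :: ks') y - x|
        = |x1 - v1| / (((k0:ℝ)+v1) * ((k0:ℝ)+x1)) := by
      rw [e1, abs_div, abs_of_pos (mul_pos hd1 hd2)]
    have habs2 : |x1 - v1| = |x2 - w| / (((k1:ℝ)+w) * ((k1:ℝ)+x2)) := by
      rw [abs_sub_comm, e2, abs_div, abs_of_pos (mul_pos hd3 hd4)]
    -- combine
    have hcomb : |Wcf (k0 :: k1 :: ks') y - x|
        = |x2 - w| / ((((k0:ℝ)+v1) * ((k0:ℝ)+x1)) * (((k1:ℝ)+w) * ((k1:ℝ)+x2))) := by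
      rw [habs1, habs2, div_div, mul_comm]
    have hbig : 2 ≤ (((k0:ℝ)+v1) * ((k0:ℝ)+x1)) * (((k1:ℝ)+w) * ((k1:ℝ)+x2)) := by
      have h1 : (1:ℝ) ≤ (k0:ℝ) + v1 := by linarith
      have h3 : (1:ℝ) ≤ (k1:ℝ) + w := by linarith
      have hxx1 : x * x1 ≤ 1/2 := by
        have hxe : x * x1 = x1 / ((k0:ℝ) + x1) := by rw [hxeq]; ring
        rw [hxe, div_le_iff₀ hd2]; linarith
      have h24 : 2 ≤ ((k0:ℝ)+x1) * ((k1:ℝ)+x2) := by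
        have ha : (k0:ℝ) + x1 = 1/x := by rw [hx1def]; ring
        have hb2 : (k1:ℝ) + x2 = 1/x1 := by rw [hx2def]; ring
        rw [ha, hb2]
        have hid : (1/x) * (1/x1) * (x * x1) = 1 := by field_simp
        nlinarith [mul_pos hx0 hx1pos, hxx1, hid]
      have hAC : 1 ≤ ((k0:ℝ)+v1) * ((k1:ℝ)+w) := by nlinarith
      have hre : ((k0:ℝ)+v1) * ((k0:ℝ)+x1) * (((k1:ℝ)+w) * ((k1:ℝ)+x2))
          = (((k0:ℝ)+v1) * ((k1:ℝ)+w)) * (((k0:ℝ)+x1) * ((k1:ℝ)+x2)) := by ring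
      rw [hre]
      nlinarith [mul_pos hd2 hd4]
    have hstep : |Wcf (k0 :: k1 :: ks') y - x| ≤ |x2 - w| / 2 := by
      rw [hcomb]
      exact div_le_div_of_nonneg_left (abs_nonneg _) (by norm_num) hbig
    have hdiv : (m + 2 + 1) / 2 = (m + 1) / 2 + 1 := by omega
    rw [hdiv, pow_succ]
    rw [abs_sub_comm, ← hwdef] at herr2
    calc |Wcf (k0 :: k1 :: ks') y - x| ≤ |x2 - w| / 2 := hstep
      _ ≤ (4 * (1/2:ℝ) ^ ((m+1)/2)) / 2 := by
          exact (div_le_div_iff_of_pos_right (by norm_num)).mpr herr2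
      _ = 4 * ((1/2:ℝ) ^ ((m+1)/2) * (1/2)) := by ring

theorem red_orbits_dense (q : ℕ → ℕ) (hq1 : ∀ n, 1 ≤ q n)
    (hq : Tendsto q atTop atTop)
    (y : ℕ → ℝ) (hy : ∀ n, y n ∈ Set.Icc (-(1/2) : ℝ) (5/2)) :
    Set.Icc (0:ℝ) 1 ⊆
      closure ((⋃ n : ℕ, {x : ℝ | ∃ g ∈ RedN (q n), moeb g (y n) = x}) ∩ Set.Icc 0 1) := by
  intro z hz
  rw [Metric.mem_closure_iff]
  intro ε hε
  -- pick an irrational x near z inside (0,1)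
  obtain ⟨hz0, hz1⟩ := hz
  have hab : max (z - ε/2) 0 < min (z + ε/2) 1 := by
    rcases max_cases (z - ε/2) 0 with ⟨h, _⟩ | ⟨h, _⟩ <;>
      rcases min_cases (z + ε/2) 1 with ⟨h', _⟩ | ⟨h', _⟩ <;> rw [h, h'] <;> linarith
  obtain ⟨x, hxirr, hxl, hxr⟩ := exists_irrational_btwn hab
  have hx0 : 0 < x := lt_of_le_of_lt (le_max_right _ _) hxl
  have hx1 : x < 1 := lt_of_lt_of_le hxr (min_le_right _ _)
  have hxz : |x - z| < ε/2 := by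
    rw [abs_lt]
    constructor
    · have := le_max_left (z - ε/2) 0; linarith
    · have := min_le_left (z + ε/2) 1; linarith
  -- pick t with 4 * (1/2)^t < ε/2
  obtain ⟨t, ht⟩ := exists_pow_lt_of_lt_one (show (0:ℝ) < ε/8 by linarith) (by norm_num : (1/2:ℝ) < 1)
  -- pick n with q n large
  obtain ⟨n, hn⟩ := (hq.eventually_ge_atTop (2*t + 2)).exists
  have hqn1 : 1 ≤ q n := hq1 n
  obtain ⟨m, hm⟩ : ∃ m, q n = m + 1 := ⟨q n - 1, by omega⟩
  have hyn := hy n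
  obtain ⟨ks, hlen, hpos, herr⟩ := cf_approx m x hxirr hx0 hx1
  have hWerr := herr (y n) hyn.1
  -- the bound is small
  have hbound : 4 * (1/2:ℝ) ^ ((m+1)/2) < ε/2 := by
    have hle : t ≤ (m+1)/2 := by omega
    have : (1/2:ℝ) ^ ((m+1)/2) ≤ (1/2:ℝ) ^ t :=
      pow_le_pow_of_le_one (by norm_num) (by norm_num) hle
    nlinarith [ht]
  set s := Wcf ks (y n) with hsdef
  have hs01 : 0 ≤ s ∧ s ≤ 1 := by
    have hml : 1 ≤ m := by omega
    obtain ⟨k, ks', rfl⟩ : ∃ k ks', ks = k :: ks' := by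
      cases ks with
      | nil => simp at hlen
      | cons k ks' => exact ⟨k, ks', rfl⟩
    have hne' : ks' ≠ [] := by
      intro h; rw [h] at hlen; simp at hlen; omega
    have := Wcf_lt_one k ks' hpos hne' (y n) hyn.1
    have hb := (Wcf_bounds (k::ks') hpos (y n) hyn.1).2 (by simp)
    exact ⟨le_of_lt hb.1, le_of_lt this⟩
  refine ⟨s, ⟨?_, hs01.1, hs01.2⟩, ?_⟩
  · apply Set.mem_iUnion.mpr
    refine ⟨n, ⟨(ks.map gammaK).prod, ?_, (moeb_prod ks hpos (y n) hyn.1).2⟩⟩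
    have := mem_RedN ks hpos
    rwa [hlen, ← hm] at this
  · rw [Real.dist_eq]
    have h1 : |z - s| ≤ |z - x| + |x - s| := abs_sub_le z x s
    have h2 : |x - s| ≤ 4 * (1/2:ℝ) ^ ((m+1)/2) := by
      rw [abs_sub_comm]; exact hWerr
    have h3 : |z - x| < ε/2 := by rw [abs_sub_comm]; exact hxz
    linarith

end
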